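/- For natural numbers k, h, j, the Gaussian triple product of probabilist's Hermite polynomials satisfies E_{z∼N(0,1)}[He_k(z) He_h(z) He_j(z)] = k! h! j! / ((s−k)! (s−h)! (s−j)!) if k + h + j = 2s is even and the three triangle inequalities k + h ≥ j, k + j ≥ h, h + j ≥ k hold, and the expectation is 0 otherwise. -/

import Mathlib

open MeasureTheory ProbabilityTheory

/-- Standard Gaussian measure on ℝ. -/
noncomputable def stdG : Measure ℝ := gaussianReal 0 1

/-- Probabilist's Hermite polynomial of degree `n`, evaluated at `x : ℝ`. -/
noncomputable def He (n : ℕ) (x : ℝ) : ℝ := Polynomial.aeval x (Polynomial.hermite n)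

section TripleProduct

open Polynomial Real Filter Topology NNReal ENNReal
open scoped Nat


lemma integrable_pow_gauss (n : ℕ) :
    Integrable (fun x : ℝ => x ^ n * Real.exp (-(x^2/2))) := by
  have h := integrable_rpow_mul_exp_neg_mul_sq (b := (1:ℝ)/2) (by norm_num)
    (s := (n:ℝ)) (lt_of_lt_of_le neg_one_lt_zero (Nat.cast_nonneg n))
  refine h.congr ?_
  filter_upwards with x
  rw [Real.rpow_natCast]
  ring_nf

lemma integrable_poly_gauss (p : ℝ[X]) :
    Integrable (fun x : ℝ => p.eval x * Real.exp (-(x^2/2))) := by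
  induction p using Polynomial.induction_on' with
  | monomial n c =>
      simp only [eval_monomial]
      have := (integrable_pow_gauss n).const_mul c
      simpa [mul_assoc] using this
  | add p q hp hq => simpa [add_mul, Pi.add_def] using hp.add hq

lemma tendsto_poly_gauss_atTop (p : ℝ[X]) :
    Tendsto (fun x : ℝ => p.eval x * Real.exp (-(x^2/2))) atTop (𝓝 0) := by
  apply squeeze_zero_norm (a := fun x => |p.eval x / Real.exp x| * Real.exp (1/2))
  · intro x
    have h1 : Real.exp (-(x^2/2)) ≤ Real.exp (-x) * Real.exp (1/2) := by
      rw [← Real.exp_add]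
      apply Real.exp_le_exp.mpr
      nlinarith [sq_nonneg (x - 1)]
    calc ‖p.eval x * Real.exp (-(x^2/2))‖
        = |p.eval x| * Real.exp (-(x^2/2)) := by
          rw [Real.norm_eq_abs, abs_mul, abs_of_pos (Real.exp_pos _)]
      _ ≤ |p.eval x| * (Real.exp (-x) * Real.exp (1/2)) :=
          mul_le_mul_of_nonneg_left h1 (abs_nonneg _)
      _ = |p.eval x / Real.exp x| * Real.exp (1/2) := by
          rw [abs_div, abs_of_pos (Real.exp_pos x), Real.exp_neg]; ring
  · have := (p.tendsto_div_exp_atTop).abs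
    simpa using this.mul_const (Real.exp (1/2))

lemma tendsto_poly_gauss_atBot (p : ℝ[X]) :
    Tendsto (fun x : ℝ => p.eval x * Real.exp (-(x^2/2))) atBot (𝓝 0) := by
  have h := tendsto_poly_gauss_atTop (p.comp (-X))
  have h2 := h.comp tendsto_neg_atBot_atTop
  refine h2.congr fun x => ?_
  simp [Function.comp, eval_comp]

lemma stein (p : ℝ[X]) :
    ∫ x : ℝ, (X * p).eval x * Real.exp (-(x^2/2)) =
      ∫ x : ℝ, (derivative p).eval x * Real.exp (-(x^2/2)) := by
  set q : ℝ[X] := derivative p - X * p with hq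
  have hderiv : ∀ x : ℝ, HasDerivAt (fun y : ℝ => p.eval y * Real.exp (-(y^2/2)))
      (q.eval x * Real.exp (-(x^2/2))) x := by
    intro x
    have h1 : HasDerivAt (fun y : ℝ => -(y^2/2)) (-x) x := by
      simpa using ((hasDerivAt_pow 2 x).div_const 2).fun_neg
    have h2 := h1.exp
    have h3 := (p.hasDerivAt x).fun_mul h2
    refine h3.congr_deriv ?_
    simp [hq]
    ring
  have hint : Integrable (fun x : ℝ => q.eval x * Real.exp (-(x^2/2))) :=
    integrable_poly_gauss q
  have hz : ∫ x : ℝ, q.eval x * Real.exp (-(x^2/2)) = 0 := by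
    have := integral_of_hasDerivAt_of_tendsto hderiv hint
      (tendsto_poly_gauss_atBot p) (tendsto_poly_gauss_atTop p)
    simpa using this
  have hsub : ∫ x : ℝ, q.eval x * Real.exp (-(x^2/2)) =
      (∫ x : ℝ, (derivative p).eval x * Real.exp (-(x^2/2)))
      - ∫ x : ℝ, (X * p).eval x * Real.exp (-(x^2/2)) := by
    rw [← integral_sub (integrable_poly_gauss _) (integrable_poly_gauss _)]
    congr 1 with x
    simp [hq]
    ring
  rw [hsub] at hz
  linarith

lemma gauss_total : ∫ x : ℝ, Real.exp (-(x^2/2)) = Real.sqrt (2*Real.pi) := by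
  have h := integral_gaussian (1/2)
  have e : (∫ x : ℝ, Real.exp (-(x^2/2))) = ∫ x : ℝ, Real.exp (-(1/2) * x^2) := by
    congr 1; funext x; ring_nf
  rw [e, h, show Real.pi / (1/2 : ℝ) = 2 * Real.pi by ring]


lemma integral_stdG (g : ℝ → ℝ) :
    ∫ z, g z ∂stdG = ∫ x, g x * ((Real.sqrt (2*Real.pi))⁻¹ * Real.exp (-(x^2/2))) := by
  rw [stdG, gaussianReal_of_var_ne_zero _ one_ne_zero]
  have hpdf : gaussianPDF 0 1 = fun x => ((gaussianPDFReal 0 1 x).toNNReal : ℝ≥0∞) := rfl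
  rw [hpdf, integral_withDensity_eq_integral_smul
    (measurable_gaussianPDFReal 0 1).real_toNNReal g]
  congr 1
  funext x
  have hnn := gaussianPDFReal_nonneg 0 1 x
  rw [NNReal.smul_def, Real.coe_toNNReal _ hnn, smul_eq_mul, mul_comm]
  unfold gaussianPDFReal
  push_cast
  norm_num [neg_div]


noncomputable def HP (n : ℕ) : ℝ[X] := (hermite n).map (algebraMap ℤ ℝ)

lemma He_eq (n : ℕ) (x : ℝ) : He n x = (HP n).eval x := by
  rw [He, HP, eval_map, aeval_def]

lemma HP_zero : HP 0 = 1 := by simp [HP, hermite_zero]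

lemma HP_one : HP 1 = X := by simp [HP, hermite_one]

lemma HP_succ (n : ℕ) : HP (n+1) = X * HP n - derivative (HP n) := by
  rw [HP, hermite_succ, Polynomial.map_sub, Polynomial.map_mul, map_X, ← derivative_map]
  rfl

lemma HP_deriv_succ : ∀ n : ℕ, derivative (HP (n+1)) = C ((n:ℝ)+1) * HP n := by
  intro n
  induction n with
  | zero => simp [HP_one, HP_zero]
  | succ n ih =>
      rw [HP_succ (n+1), derivative_sub, derivative_mul, derivative_X, one_mul, ih,
        derivative_mul, derivative_C, zero_mul, zero_add, HP_succ n]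
      simp only [Nat.cast_add, Nat.cast_one, C_add, C_1]
      ring

lemma HP_deriv (n : ℕ) : derivative (HP n) = C (n:ℝ) * HP (n-1) := by
  cases n with
  | zero => simp [HP_zero]
  | succ n => rw [HP_deriv_succ]; push_cast; simp

noncomputable def G (p : ℝ[X]) : ℝ := ∫ x : ℝ, p.eval x * Real.exp (-(x^2/2))

lemma G_sub (p q : ℝ[X]) : G (p - q) = G p - G q := by
  unfold G
  rw [← integral_sub (integrable_poly_gauss _) (integrable_poly_gauss _)]
  congr 1; funext x; simp [eval_sub]; ring

lemma G_add (p q : ℝ[X]) : G (p + q) = G p + G q := by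
  unfold G
  rw [← integral_add (integrable_poly_gauss _) (integrable_poly_gauss _)]
  congr 1; funext x; simp [eval_add]; ring

lemma G_C_mul (a : ℝ) (p : ℝ[X]) : G (C a * p) = a * G p := by
  unfold G
  rw [← integral_const_mul]
  congr 1; funext x; simp; ring

lemma G_stein (p : ℝ[X]) : G (X * p) = G (derivative p) := stein p

lemma G_one : G 1 = Real.sqrt (2*Real.pi) := by
  unfold G; simpa using gauss_total

noncomputable def T (k h j : ℕ) : ℝ := G (HP k * HP h * HP j)

lemma T_zero : T 0 0 0 = Real.sqrt (2*Real.pi) := by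
  rw [T, HP_zero]
  simpa using G_one

lemma T_swap12 (k h j : ℕ) : T k h j = T h k j := by
  unfold T
  rw [show HP k * HP h * HP j = HP h * HP k * HP j by ring]

lemma T_swap13 (k h j : ℕ) : T k h j = T j h k := by
  unfold T
  rw [show HP k * HP h * HP j = HP j * HP h * HP k by ring]

lemma T_succ (k h j : ℕ) :
    T (k+1) h j = h * T k (h-1) j + j * T k h (j-1) := by
  have e0 : T (k+1) h j
      = G (X * (HP k * HP h * HP j)) - G (derivative (HP k) * (HP h * HP j)) := by
    rw [T, ← G_sub]; congr 1; rw [HP_succ]; ring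
  have e1 : G (X * (HP k * HP h * HP j))
      = G (derivative (HP k) * (HP h * HP j))
        + (G (HP k * derivative (HP h) * HP j) + G (HP k * HP h * derivative (HP j))) := by
    rw [G_stein, ← G_add, ← G_add]
    congr 1
    rw [derivative_mul, derivative_mul]
    ring
  have e2 : G (HP k * derivative (HP h) * HP j) = h * T k (h-1) j := by
    rw [HP_deriv,
      show HP k * (C (h:ℝ) * HP (h-1)) * HP j = C (h:ℝ) * (HP k * HP (h-1) * HP j) by ring,
      G_C_mul, T]
  have e3 : G (HP k * HP h * derivative (HP j)) = j * T k h (j-1) := by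
    rw [HP_deriv,
      show HP k * HP h * (C (j:ℝ) * HP (j-1)) = C (j:ℝ) * (HP k * HP h * HP (j-1)) by ring,
      G_C_mul, T]
  rw [e0, e1, e2, e3]
  ring

lemma integral_He_eq (k h j : ℕ) :
    ∫ z, He k z * He h z * He j z ∂stdG = (Real.sqrt (2*Real.pi))⁻¹ * T k h j := by
  rw [integral_stdG (fun z => He k z * He h z * He j z), T, G, ← integral_const_mul]
  congr 1; funext x
  simp only [He_eq, eval_mul]
  ring



noncomputable def fT (k h j : ℕ) : ℝ :=
  if Even (k + h + j) ∧ j ≤ k + h ∧ h ≤ k + j ∧ k ≤ h + j then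
    (k ! * h ! * j ! : ℝ) /
      (((k+h+j)/2 - k)! * ((k+h+j)/2 - h)! * ((k+h+j)/2 - j)!)
  else 0

lemma fT_eval {k h j s : ℕ} (hs : k + h + j = 2*s) :
    fT k h j = if k ≤ s ∧ h ≤ s ∧ j ≤ s then
      (k ! * h ! * j ! : ℝ) / ((s-k)! * (s-h)! * (s-j)!) else 0 := by
  unfold fT
  have hdiv : (k+h+j)/2 = s := by omega
  by_cases hc : k ≤ s ∧ h ≤ s ∧ j ≤ s
  · rw [if_pos ⟨⟨s, by omega⟩, by omega, by omega, by omega⟩, if_pos hc, hdiv]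
  · rw [if_neg, if_neg hc]
    rintro ⟨-, h1, h2, h3⟩
    exact hc ⟨by omega, by omega, by omega⟩

lemma fT_odd {k h j : ℕ} (hodd : ¬ Even (k + h + j)) : fT k h j = 0 :=
  if_neg (by tauto)

lemma fT_swap12 (k h j : ℕ) : fT k h j = fT h k j := by
  unfold fT
  rw [show h+k+j = k+h+j from by ring]
  by_cases H : Even (k+h+j) ∧ j ≤ k+h ∧ h ≤ k+j ∧ k ≤ h+j
  · rw [if_pos H, if_pos ⟨H.1, by omega, by omega, by omega⟩]
    ring_nf
  · rw [if_neg H, if_neg]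
    rintro ⟨he, h1, h2, h3⟩
    exact H ⟨he, by omega, by omega, by omega⟩

lemma fT_swap13 (k h j : ℕ) : fT k h j = fT j h k := by
  unfold fT
  rw [show j+h+k = k+h+j from by ring]
  by_cases H : Even (k+h+j) ∧ j ≤ k+h ∧ h ≤ k+j ∧ k ≤ h+j
  · rw [if_pos H, if_pos ⟨H.1, by omega, by omega, by omega⟩]
    ring_nf
  · rw [if_neg H, if_neg]
    rintro ⟨he, h1, h2, h3⟩
    exact H ⟨he, by omega, by omega, by omega⟩

lemma fT_zero : fT 0 0 0 = 1 := by
  norm_num [fT]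

lemma cast_fact_pred {n : ℕ} (hn : 1 ≤ n) :
    ((n ! : ℕ) : ℝ) = (n : ℝ) * ((n-1)! : ℕ) := by
  exact_mod_cast (Nat.mul_factorial_pred (by omega)).symm

lemma fact_cast_ne_zero (n : ℕ) : ((n ! : ℕ) : ℝ) ≠ 0 := by
  exact_mod_cast (Nat.factorial_pos n).ne'

lemma fT_rec (k h j : ℕ) :
    fT (k+1) h j = h * fT k (h-1) j + j * fT k h (j-1) := by
  by_cases hev : Even ((k+1) + h + j)
  case neg =>
    rw [fT_odd hev]
    have t1 : (h:ℝ) * fT k (h-1) j = 0 := by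
      rcases Nat.eq_zero_or_pos h with h0 | hpos
      · simp [h0]
      · rw [fT_odd (by simp only [Nat.even_iff] at *; omega)]; ring
    have t2 : (j:ℝ) * fT k h (j-1) = 0 := by
      rcases Nat.eq_zero_or_pos j with h0 | hpos
      · simp [h0]
      · rw [fT_odd (by simp only [Nat.even_iff] at *; omega)]; ring
    rw [t1, t2]; ring
  case pos =>
    obtain ⟨s, hs⟩ := hev
    replace hs : (k+1) + h + j = 2 * s := by omega
    have hs1 : 1 ≤ s := by omega
    rw [fT_eval hs]
    rcases h with _ | h'
    · rcases j with _ | j'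
      · -- h = 0, j = 0
        rw [if_neg (by omega)]
        simp
      · -- h = 0, j = j'+1
        simp only [Nat.add_sub_cancel, Nat.cast_zero, zero_mul, zero_add, Nat.zero_sub]
        rw [fT_eval (show k + 0 + j' = 2*(s-1) by omega)]
        by_cases hc : k+1 ≤ s ∧ j'+1 ≤ s
        · have hk : k+1 = s := by omega
          have hj : j'+1 = s := by omega
          rw [if_pos (by omega), if_pos (by omega)]
          have i1 : s - (k+1) = 0 := by omega
          have i2 : s - (j'+1) = 0 := by omega
          have i3 : s - 1 - k = 0 := by omega
          have i4 : s - 1 - j' = 0 := by omega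
          have i5 : s - 0 = s := by omega
          have i6 : s - 1 - 0 = s - 1 := by omega
          rw [i1, i2, i3, i4, i5, i6]
          have e1 : (((k+1)! : ℕ) : ℝ) = (s:ℝ) * ((s-1)! : ℕ) := by
            rw [show k+1 = s from hk]; exact cast_fact_pred hs1
          have e2 : (((j'+1)! : ℕ) : ℝ) = (s:ℝ) * ((s-1)! : ℕ) := by
            rw [show j'+1 = s from hj]; exact cast_fact_pred hs1
          have e3 : ((k ! : ℕ) : ℝ) = ((s-1)! : ℕ) := by rw [show k = s-1 by omega]
          have e4 : ((j' ! : ℕ) : ℝ) = ((s-1)! : ℕ) := by rw [show j' = s-1 by omega]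
          have e5 : ((j':ℝ)+1) = (s:ℝ) := by exact_mod_cast hj
          rw [e1, e2, e3, e4]
          push_cast
          rw [e5]
          have hS := fact_cast_ne_zero s
          have hS1 := fact_cast_ne_zero (s-1)
          field_simp
          exact (cast_fact_pred hs1).symm
        · rw [if_neg (by omega), if_neg (by omega)]
          ring
    · rcases j with _ | j'
      · -- h = h'+1, j = 0
        simp only [Nat.add_sub_cancel, Nat.cast_zero, zero_mul, add_zero, Nat.zero_sub]
        rw [fT_eval (show k + h' + 0 = 2*(s-1) by omega)]
        by_cases hc : k+1 ≤ s ∧ h'+1 ≤ s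
        · have hk : k+1 = s := by omega
          have hh : h'+1 = s := by omega
          rw [if_pos (by omega), if_pos (by omega)]
          have i1 : s - (k+1) = 0 := by omega
          have i2 : s - (h'+1) = 0 := by omega
          have i3 : s - 1 - k = 0 := by omega
          have i4 : s - 1 - h' = 0 := by omega
          have i5 : s - 0 = s := by omega
          have i6 : s - 1 - 0 = s - 1 := by omega
          rw [i1, i2, i3, i4, i5, i6]
          have e1 : (((k+1)! : ℕ) : ℝ) = (s:ℝ) * ((s-1)! : ℕ) := by
            rw [show k+1 = s from hk]; exact cast_fact_pred hs1
          have e2 : (((h'+1)! : ℕ) : ℝ) = (s:ℝ) * ((s-1)! : ℕ) := by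
            rw [show h'+1 = s from hh]; exact cast_fact_pred hs1
          have e3 : ((k ! : ℕ) : ℝ) = ((s-1)! : ℕ) := by rw [show k = s-1 by omega]
          have e4 : ((h' ! : ℕ) : ℝ) = ((s-1)! : ℕ) := by rw [show h' = s-1 by omega]
          have e5 : ((h':ℝ)+1) = (s:ℝ) := by exact_mod_cast hh
          rw [e1, e2, e3, e4]
          push_cast
          rw [e5]
          have hS := fact_cast_ne_zero s
          have hS1 := fact_cast_ne_zero (s-1)
          field_simp
          exact (cast_fact_pred hs1).symm
        · rw [if_neg (by omega), if_neg (by omega)]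
          ring
      · -- h = h'+1, j = j'+1
        simp only [Nat.add_sub_cancel]
        rw [fT_eval (show k + h' + (j'+1) = 2*(s-1) by omega),
          fT_eval (show k + (h'+1) + j' = 2*(s-1) by omega)]
        by_cases hc : k+1 ≤ s ∧ h'+1 ≤ s ∧ j'+1 ≤ s
        case neg =>
          rw [if_neg (by omega), if_neg (by omega), if_neg (by omega)]
          ring
        case pos =>
          rw [if_pos (by omega)]
          have i1 : s - 1 - k = s - (k+1) := by omega
          have i2 : s - 1 - h' = s - (h'+1) := by omega
          have i3 : s - 1 - (j'+1) = s - (j'+1) - 1 := by omega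
          have i4 : s - 1 - (h'+1) = s - (h'+1) - 1 := by omega
          have i5 : s - 1 - j' = s - (j'+1) := by omega
          rw [i1, i2, i3, i4, i5]
          set b := s - (h'+1) with hb
          set c := s - (j'+1) with hc'
          have hbc : b + c = k + 1 := by omega
          have hA := fact_cast_ne_zero (s - (k+1))
          have hB1 := fact_cast_ne_zero (b - 1)
          have hC1 := fact_cast_ne_zero (c - 1)
          have eH : (((h'+1)! : ℕ) : ℝ) = ((h':ℝ)+1) * (h' ! : ℕ) := by
            push_cast [Nat.factorial_succ]; ring
          have eJ : (((j'+1)! : ℕ) : ℝ) = ((j':ℝ)+1) * (j' ! : ℕ) := by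
            push_cast [Nat.factorial_succ]; ring
          have eK : (((k+1)! : ℕ) : ℝ) = ((b:ℝ) + (c:ℝ)) * (k ! : ℕ) := by
            have : ((b+c) : ℝ) = ((k:ℝ)+1) := by exact_mod_cast hbc
            push_cast [Nat.factorial_succ]
            push_cast at this
            rw [this]
          rcases Nat.eq_zero_or_pos c with c0 | cpos
          · -- c = 0 : j'+1 = s, term1 vanishes
            have hb1 : 1 ≤ b := by omega
            rw [if_neg (by omega), if_pos (by omega)]
            have eB : ((b ! : ℕ) : ℝ) = (b:ℝ) * ((b-1)! : ℕ) := cast_fact_pred hb1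
            rw [eK, eJ, eB, c0, eH]
            have hb0 : (b:ℝ) ≠ 0 := Nat.cast_ne_zero.mpr (by omega)
            simp only [Nat.factorial_zero, Nat.cast_one, c0, Nat.cast_zero, add_zero]
            field_simp
            push_cast
            ring
          · rcases Nat.eq_zero_or_pos b with b0 | bpos
            · -- b = 0 : h'+1 = s, term2 vanishes
              have hcge : 1 ≤ c := by omega
              rw [if_pos (by omega), if_neg (by omega)]
              have eC : ((c ! : ℕ) : ℝ) = (c:ℝ) * ((c-1)! : ℕ) := cast_fact_pred hcge
              rw [eK, eJ, eC, b0, eH]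
              have hc0 : (c:ℝ) ≠ 0 := Nat.cast_ne_zero.mpr (by omega)
              simp only [Nat.factorial_zero, Nat.cast_one, b0, Nat.cast_zero, zero_add]
              field_simp
              push_cast
              ring
            · -- generic case
              rw [if_pos (by omega), if_pos (by omega)]
              have eB : ((b ! : ℕ) : ℝ) = (b:ℝ) * ((b-1)! : ℕ) := cast_fact_pred bpos
              have eC : ((c ! : ℕ) : ℝ) = (c:ℝ) * ((c-1)! : ℕ) := cast_fact_pred cpos
              have hb0 : (b:ℝ) ≠ 0 := Nat.cast_ne_zero.mpr (by omega)
              have hc0 : (c:ℝ) ≠ 0 := Nat.cast_ne_zero.mpr (by omega)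
              rw [eK, eJ, eB, eC, eH]
              field_simp
              push_cast
              ring

lemma main_eq : ∀ n k h j : ℕ, k + h + j = n →
    (Real.sqrt (2*Real.pi))⁻¹ * T k h j = fT k h j := by
  intro n
  induction n using Nat.strong_induction_on with
  | _ n ih =>
    intro k h j hn
    have hsq : Real.sqrt (2*Real.pi) ≠ 0 := by
      positivity
    rcases k with _ | k'
    · rcases h with _ | h'
      · rcases j with _ | j'
        · rw [T_zero, fT_zero, inv_mul_cancel₀ hsq]
        · rw [T_swap13, fT_swap13, T_succ, fT_rec]
          simp
      · rw [T_swap12, fT_swap12, T_succ, fT_rec]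
        simp only [Nat.cast_zero, zero_mul, zero_add]
        rw [← ih (h' + 0 + (j-1)) (by omega) h' 0 (j-1) (by omega)]
        ring
    · rw [T_succ, fT_rec]
      rw [← ih (k' + (h-1) + j) (by omega) k' (h-1) j (by omega),
        ← ih (k' + h + (j-1)) (by omega) k' h (j-1) (by omega)]
      ring

end TripleProduct

/-- Gaussian triple product of probabilist's Hermite polynomials:
`E[He_k He_h He_j] = k! h! j! / ((s−k)!(s−h)!(s−j)!)` when `k+h+j = 2s` is even and
the triangle inequalities hold, and `0` otherwise. -/
theorem stmt4 (k h j : ℕ) :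
    ((Even (k + h + j) ∧ j ≤ k + h ∧ h ≤ k + j ∧ k ≤ h + j) →
      ∫ z, He k z * He h z * He j z ∂stdG
        = (Nat.factorial k * Nat.factorial h * Nat.factorial j : ℝ) /
          (Nat.factorial ((k + h + j) / 2 - k) *
           Nat.factorial ((k + h + j) / 2 - h) *
           Nat.factorial ((k + h + j) / 2 - j))) ∧
    (¬(Even (k + h + j) ∧ j ≤ k + h ∧ h ≤ k + j ∧ k ≤ h + j) →
      ∫ z, He k z * He h z * He j z ∂stdG = 0) := by
  have key : ∫ z, He k z * He h z * He j z ∂stdG = fT k h j := by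
    rw [integral_He_eq, main_eq (k+h+j) k h j rfl]
  constructor
  · intro hcond
    rw [key, fT, if_pos hcond]
  · intro hcond
    rw [key, fT, if_neg hcond]
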